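/- For every real number t, the biquadratic form p_t(x,y) = ((t²−1)²x₁²+x₂²+t⁴x₃²)y₁² + ((t²−1)²x₂²+x₃²+t⁴x₁²)y₂² + ((t²−1)²x₃²+x₁²+t⁴x₂²)y₃² − 2(t⁴−t²+1)(x₁x₂y₁y₂ + x₁x₃y₁y₃ + x₂x₃y₂y₃) satisfies p_t(x,y) ≥ 0 for all x, y ∈ ℝ³. -/
import Mathlib

set_option maxHeartbeats 2000000

/-- The biquadratic form `p_t(x, y) = yᵀ Φ_t(xxᵀ) y`. -/
def pform (t : ℝ) (x y : Fin 3 → ℝ) : ℝ :=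
  ((t^2-1)^2 * x 0^2 + x 1^2 + t^4 * x 2^2) * y 0^2 +
  ((t^2-1)^2 * x 1^2 + x 2^2 + t^4 * x 0^2) * y 1^2 +
  ((t^2-1)^2 * x 2^2 + x 0^2 + t^4 * x 1^2) * y 2^2 -
  2 * (t^4-t^2+1) * (x 0 * x 1 * y 0 * y 1 + x 0 * x 2 * y 0 * y 2 + x 1 * x 2 * y 1 * y 2)

/-- Nonnegativity of the key cubic form `G` on the nonnegative orthant. -/
lemma G_nonneg (a s1 s2 s3 : ℝ) (ha : 0 ≤ a) (h1 : 0 ≤ s1) (h2 : 0 ≤ s2) (h3 : 0 ≤ s3) :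
    0 ≤ a^2*(s1^3+s2^3+s3^3) + (a^4-2*a)*(s1^2*s2+s2^2*s3+s3^2*s1)
      + (1-2*a^3)*(s1^2*s3+s2^2*s1+s3^2*s2)
      - 3*(a^4-2*a^3+a^2-2*a+1)*(s1*s2*s3) := by
  have hq : (0:ℝ) ≤ ((s1-s2)^2+(s2-s3)^2+(s3-s1)^2)/2 := by positivity
  rcases le_total s1 s2 with h12 | h21
  · rcases le_total s1 s3 with h13 | h31
    · -- s1 is minimal
      have key : a^2*(s1^3+s2^3+s3^3) + (a^4-2*a)*(s1^2*s2+s2^2*s3+s3^2*s1)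
          + (1-2*a^3)*(s1^2*s3+s2^2*s1+s3^2*s2)
          - 3*(a^4-2*a^3+a^2-2*a+1)*(s1*s2*s3)
          = ((s2-s1) + a^2*(s3-s1))*(a*(s2-s1)-(s3-s1))^2
            + s1*(a^2-a+1)^2*(((s1-s2)^2+(s2-s3)^2+(s3-s1)^2)/2) := by ring
      rw [key]
      have t1 : (0:ℝ) ≤ (s2-s1) + a^2*(s3-s1) :=
        add_nonneg (by linarith) (mul_nonneg (sq_nonneg a) (by linarith))
      exact add_nonneg (mul_nonneg t1 (sq_nonneg _))
        (mul_nonneg (mul_nonneg h1 (sq_nonneg _)) hq)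
    · -- s3 is minimal
      have key : a^2*(s1^3+s2^3+s3^3) + (a^4-2*a)*(s1^2*s2+s2^2*s3+s3^2*s1)
          + (1-2*a^3)*(s1^2*s3+s2^2*s1+s3^2*s2)
          - 3*(a^4-2*a^3+a^2-2*a+1)*(s1*s2*s3)
          = ((s1-s3) + a^2*(s2-s3))*(a*(s1-s3)-(s2-s3))^2
            + s3*(a^2-a+1)^2*(((s1-s2)^2+(s2-s3)^2+(s3-s1)^2)/2) := by ring
      rw [key]
      have t1 : (0:ℝ) ≤ (s1-s3) + a^2*(s2-s3) :=
        add_nonneg (by linarith) (mul_nonneg (sq_nonneg a) (by linarith))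
      exact add_nonneg (mul_nonneg t1 (sq_nonneg _))
        (mul_nonneg (mul_nonneg h3 (sq_nonneg _)) hq)
  · rcases le_total s2 s3 with h23 | h32
    · -- s2 is minimal
      have key : a^2*(s1^3+s2^3+s3^3) + (a^4-2*a)*(s1^2*s2+s2^2*s3+s3^2*s1)
          + (1-2*a^3)*(s1^2*s3+s2^2*s1+s3^2*s2)
          - 3*(a^4-2*a^3+a^2-2*a+1)*(s1*s2*s3)
          = ((s3-s2) + a^2*(s1-s2))*(a*(s3-s2)-(s1-s2))^2
            + s2*(a^2-a+1)^2*(((s1-s2)^2+(s2-s3)^2+(s3-s1)^2)/2) := by ring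
      rw [key]
      have t1 : (0:ℝ) ≤ (s3-s2) + a^2*(s1-s2) :=
        add_nonneg (by linarith) (mul_nonneg (sq_nonneg a) (by linarith))
      exact add_nonneg (mul_nonneg t1 (sq_nonneg _))
        (mul_nonneg (mul_nonneg h2 (sq_nonneg _)) hq)
    · -- s3 is minimal
      have key : a^2*(s1^3+s2^3+s3^3) + (a^4-2*a)*(s1^2*s2+s2^2*s3+s3^2*s1)
          + (1-2*a^3)*(s1^2*s3+s2^2*s1+s3^2*s2)
          - 3*(a^4-2*a^3+a^2-2*a+1)*(s1*s2*s3)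
          = ((s1-s3) + a^2*(s2-s3))*(a*(s1-s3)-(s2-s3))^2
            + s3*(a^2-a+1)^2*(((s1-s2)^2+(s2-s3)^2+(s3-s1)^2)/2) := by ring
      rw [key]
      have t1 : (0:ℝ) ≤ (s1-s3) + a^2*(s2-s3) :=
        add_nonneg (by linarith) (mul_nonneg (sq_nonneg a) (by linarith))
      exact add_nonneg (mul_nonneg t1 (sq_nonneg _))
        (mul_nonneg (mul_nonneg h3 (sq_nonneg _)) hq)

/-- Scalar form of the main theorem. -/
lemma key_scalar (t x0 x1 x2 y0 y1 y2 : ℝ) :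
    0 ≤ ((t^2-1)^2 * x0^2 + x1^2 + t^4 * x2^2) * y0^2 +
        ((t^2-1)^2 * x1^2 + x2^2 + t^4 * x0^2) * y1^2 +
        ((t^2-1)^2 * x2^2 + x0^2 + t^4 * x1^2) * y2^2 -
        2 * (t^4-t^2+1) * (x0 * x1 * y0 * y1 + x0 * x2 * y0 * y2 + x1 * x2 * y1 * y2) := by
  have hm : (0:ℝ) ≤ t^4 - t^2 + 1 := by nlinarith [sq_nonneg (2*t^2-1)]
  have he1 : (0:ℝ) ≤ (2*t^4-3*t^2+2)*x0^2 + x1^2 + t^4*x2^2 := by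
    nlinarith [sq_nonneg ((4*t^2-3)*x0), sq_nonneg x0, sq_nonneg x1, sq_nonneg (t^2*x2)]
  have he2 : (0:ℝ) ≤ (2*t^4-3*t^2+2)*x1^2 + x2^2 + t^4*x0^2 := by
    nlinarith [sq_nonneg ((4*t^2-3)*x1), sq_nonneg x1, sq_nonneg x2, sq_nonneg (t^2*x0)]
  have he3 : (0:ℝ) ≤ (2*t^4-3*t^2+2)*x2^2 + x0^2 + t^4*x1^2 := by
    nlinarith [sq_nonneg ((4*t^2-3)*x2), sq_nonneg x2, sq_nonneg x0, sq_nonneg (t^2*x1)]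
  have hG := G_nonneg (t^2) (x0^2) (x1^2) (x2^2) (sq_nonneg t) (sq_nonneg x0)
    (sq_nonneg x1) (sq_nonneg x2)
  -- F = det of the matrix of the quadratic form in y; F = (t²-1)² G ≥ 0
  have hF : (0:ℝ) ≤
      ((2*t^4-3*t^2+2)*x0^2 + x1^2 + t^4*x2^2) * ((2*t^4-3*t^2+2)*x1^2 + x2^2 + t^4*x0^2)
        * ((2*t^4-3*t^2+2)*x2^2 + x0^2 + t^4*x1^2)
      - (t^4-t^2+1) * (x0^2 * (((2*t^4-3*t^2+2)*x1^2 + x2^2 + t^4*x0^2)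
            * ((2*t^4-3*t^2+2)*x2^2 + x0^2 + t^4*x1^2))
          + x1^2 * (((2*t^4-3*t^2+2)*x2^2 + x0^2 + t^4*x1^2)
            * ((2*t^4-3*t^2+2)*x0^2 + x1^2 + t^4*x2^2))
          + x2^2 * (((2*t^4-3*t^2+2)*x0^2 + x1^2 + t^4*x2^2)
            * ((2*t^4-3*t^2+2)*x1^2 + x2^2 + t^4*x0^2))) := by
    linarith [mul_nonneg (sq_nonneg (t^2-1)) hG]
  rcases eq_or_lt_of_le (mul_nonneg (mul_nonneg he1 he2) he3) with hE | hE
  · -- the product e1*e2*e3 vanishes : some eᵢ = 0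
    rcases mul_eq_zero.mp hE.symm with h12 | hz3
    · rcases mul_eq_zero.mp h12 with hz1 | hz2
      · -- e1 = 0 : x0 = x1 = 0 and t²x2 = 0
        have hx0 : x0 = 0 := by
          have h : x0^2 ≤ 0 := by
            nlinarith [sq_nonneg ((4*t^2-3)*x0), sq_nonneg x1, sq_nonneg (t^2*x2)]
          exact (pow_eq_zero_iff two_ne_zero).mp (le_antisymm h (sq_nonneg x0))
        have hx1 : x1 = 0 := by
          have h : x1^2 ≤ 0 := by
            nlinarith [sq_nonneg ((4*t^2-3)*x0), sq_nonneg x0, sq_nonneg (t^2*x2)]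
          exact (pow_eq_zero_iff two_ne_zero).mp (le_antisymm h (sq_nonneg x1))
        subst hx0; subst hx1
        nlinarith [sq_nonneg (t^2*x2*y0), sq_nonneg (x2*y1), sq_nonneg ((t^2-1)*x2*y2)]
      · -- e2 = 0 : x1 = x2 = 0
        have hx1 : x1 = 0 := by
          have h : x1^2 ≤ 0 := by
            nlinarith [sq_nonneg ((4*t^2-3)*x1), sq_nonneg x2, sq_nonneg (t^2*x0)]
          exact (pow_eq_zero_iff two_ne_zero).mp (le_antisymm h (sq_nonneg x1))
        have hx2 : x2 = 0 := by
          have h : x2^2 ≤ 0 := by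
            nlinarith [sq_nonneg ((4*t^2-3)*x1), sq_nonneg x1, sq_nonneg (t^2*x0)]
          exact (pow_eq_zero_iff two_ne_zero).mp (le_antisymm h (sq_nonneg x2))
        subst hx1; subst hx2
        nlinarith [sq_nonneg ((t^2-1)*x0*y0), sq_nonneg (t^2*x0*y1), sq_nonneg (x0*y2)]
    · -- e3 = 0 : x2 = x0 = 0
      have hx2 : x2 = 0 := by
        have h : x2^2 ≤ 0 := by
          nlinarith [sq_nonneg ((4*t^2-3)*x2), sq_nonneg x0, sq_nonneg (t^2*x1)]
        exact (pow_eq_zero_iff two_ne_zero).mp (le_antisymm h (sq_nonneg x2))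
      have hx0 : x0 = 0 := by
        have h : x0^2 ≤ 0 := by
          nlinarith [sq_nonneg ((4*t^2-3)*x2), sq_nonneg x2, sq_nonneg (t^2*x1)]
        exact (pow_eq_zero_iff two_ne_zero).mp (le_antisymm h (sq_nonneg x0))
      subst hx2; subst hx0
      nlinarith [sq_nonneg (x1*y0), sq_nonneg ((t^2-1)*x1*y1), sq_nonneg (t^2*x1*y2)]
  · -- e1*e2*e3 > 0 : use the Cauchy–Schwarz / Lagrange identity
    set e1 : ℝ := (2*t^4-3*t^2+2)*x0^2 + x1^2 + t^4*x2^2 with he1d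
    set e2 : ℝ := (2*t^4-3*t^2+2)*x1^2 + x2^2 + t^4*x0^2 with he2d
    set e3 : ℝ := (2*t^4-3*t^2+2)*x2^2 + x0^2 + t^4*x1^2 with he3d
    have hA : (0:ℝ) ≤
        (e1*e2*e3 - (t^4-t^2+1)*(x0^2*(e2*e3) + x1^2*(e3*e1) + x2^2*(e1*e2)))
          * (e1*y0^2 + e2*y1^2 + e3*y2^2) := by
      apply mul_nonneg
      · exact hF
      · exact add_nonneg (add_nonneg (mul_nonneg he1 (sq_nonneg y0))
          (mul_nonneg he2 (sq_nonneg y1))) (mul_nonneg he3 (sq_nonneg y2))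
    have hB : (0:ℝ) ≤ (t^4-t^2+1) *
        (e1*(e3*x1*y2 - e2*x2*y1)^2 + e2*(e1*x2*y0 - e3*x0*y2)^2
          + e3*(e2*x0*y1 - e1*x1*y0)^2) :=
      mul_nonneg hm (add_nonneg (add_nonneg (mul_nonneg he1 (sq_nonneg _))
        (mul_nonneg he2 (sq_nonneg _))) (mul_nonneg he3 (sq_nonneg _)))
    have hprod : (0:ℝ) ≤
        (((t^2-1)^2 * x0^2 + x1^2 + t^4 * x2^2) * y0^2 +
        ((t^2-1)^2 * x1^2 + x2^2 + t^4 * x0^2) * y1^2 +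
        ((t^2-1)^2 * x2^2 + x0^2 + t^4 * x1^2) * y2^2 -
        2 * (t^4-t^2+1) * (x0 * x1 * y0 * y1 + x0 * x2 * y0 * y2 + x1 * x2 * y1 * y2))
          * (e1*e2*e3) := by
      have hkey : (((t^2-1)^2 * x0^2 + x1^2 + t^4 * x2^2) * y0^2 +
          ((t^2-1)^2 * x1^2 + x2^2 + t^4 * x0^2) * y1^2 +
          ((t^2-1)^2 * x2^2 + x0^2 + t^4 * x1^2) * y2^2 -
          2 * (t^4-t^2+1) * (x0 * x1 * y0 * y1 + x0 * x2 * y0 * y2 + x1 * x2 * y1 * y2))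
            * (e1*e2*e3)
          = (e1*e2*e3 - (t^4-t^2+1)*(x0^2*(e2*e3) + x1^2*(e3*e1) + x2^2*(e1*e2)))
              * (e1*y0^2 + e2*y1^2 + e3*y2^2)
            + (t^4-t^2+1) *
              (e1*(e3*x1*y2 - e2*x2*y1)^2 + e2*(e1*x2*y0 - e3*x0*y2)^2
                + e3*(e2*x0*y1 - e1*x1*y0)^2) := by
        rw [he1d, he2d, he3d]; ring
      rw [hkey]; exact add_nonneg hA hB
    exact le_of_mul_le_mul_right (by linarith) hE

/-- For every real `t`, the biquadratic form `p_t` is nonnegative on `ℝ³ × ℝ³`. -/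
theorem pform_nonneg (t : ℝ) (x y : Fin 3 → ℝ) : 0 ≤ pform t x y := by
  unfold pform
  exact key_scalar t (x 0) (x 1) (x 2) (y 0) (y 1) (y 2)
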